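/- If W is a Hermitian operator on C^m ⊗ C^m with tr(Wπ) ≤ 1 for all separable states π, then for any density matrix σ, −tr(Wσ) ≤ R(σ) whenever in addition tr(Wπ) ≥ 0 for all separable π. That is, every normalized entanglement witness gives a lower bound on the robustness of entanglement. -/

import Mathlib

open scoped BigOperators Matrix ComplexOrder

noncomputable section

/-- The pure product state |a⟩⟨a| ⊗ |b⟩⟨b| as a matrix on the bipartite index type. -/
def prodState {α β : Type*} [Fintype α] [Fintype β] (a : α → ℂ) (b : β → ℂ) :
    Matrix (α × β) (α × β) ℂ :=
  fun x y => (a x.1 * star (a y.1)) * (b x.2 * star (b y.2))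

/-- A bipartite matrix is separable if it is a convex combination of pure product states. -/
def SepState {α β : Type*} [Fintype α] [Fintype β]
    (σ : Matrix (α × β) (α × β) ℂ) : Prop :=
  ∃ (k : ℕ) (p : Fin k → ℝ) (a : Fin k → α → ℂ) (b : Fin k → β → ℂ),
    (∀ i, 0 ≤ p i) ∧ (∑ i, p i = 1) ∧
    (∀ i, ∑ x, ‖a i x‖ ^ 2 = 1) ∧ (∀ i, ∑ x, ‖b i x‖ ^ 2 = 1) ∧
    σ = ∑ i, ((p i : ℂ)) • prodState (a i) (b i)

/-- A density matrix: positive semidefinite with unit trace. -/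
def IsDensity {n : Type*} [Fintype n] [DecidableEq n] (σ : Matrix n n ℂ) : Prop :=
  σ.PosSemidef ∧ σ.trace = 1

/-- The robustness of entanglement: the least s ≥ 0 such that mixing σ with some
separable state π with weights 1/(1+s), s/(1+s) yields a separable state. -/
def robustness {α β : Type*} [Fintype α] [Fintype β] [DecidableEq α] [DecidableEq β]
    (σ : Matrix (α × β) (α × β) ℂ) : ℝ :=
  sInf { s : ℝ | 0 ≤ s ∧ ∃ π : Matrix (α × β) (α × β) ℂ, SepState π ∧
    SepState ((((1 + s)⁻¹ : ℝ) : ℂ) • σ + (((s / (1 + s)) : ℝ) : ℂ) • π) }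


namespace WLB

def ω : ℂ := ⟨-1/2, Real.sqrt 3 / 2⟩

lemma sqrt3_sq : Real.sqrt 3 * Real.sqrt 3 = 3 := Real.mul_self_sqrt (by norm_num)

lemma omega_star : star ω = ω ^ 2 := by
  apply Complex.ext <;>
  simp [ω, pow_two, Complex.mul_re, Complex.mul_im, sqrt3_sq]
    <;> nlinarith [sqrt3_sq]

lemma omega_mul_star : ω * star ω = 1 := by
  apply Complex.ext <;>
    simp [ω, Complex.mul_re, Complex.mul_im, sqrt3_sq]
    <;> nlinarith [sqrt3_sq]

lemma omega_sum : 1 + ω + ω ^ 2 = 0 := by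
  rw [← omega_star]
  apply Complex.ext <;> simp [ω] <;> ring

lemma omega_cube : ω ^ 3 = 1 := by
  have : ω ^ 3 = ω * ω ^ 2 := by ring
  rw [this, ← omega_star, omega_mul_star]

lemma norm_omega_pow (t : ℕ) : ‖ω ^ t‖ = 1 := by
  have hn : Complex.normSq ω = 1 := by
    have := omega_mul_star
    rw [Complex.star_def, Complex.mul_conj] at this
    exact_mod_cast this
  have h1 : ‖ω‖ = 1 := by
    rw [Complex.norm_def, hn, Real.sqrt_one]
  simp [norm_pow, h1]

/-- basis vector -/
def evec {m : ℕ} (j : Fin m) : Fin m → ℂ := fun x => if x = j then 1 else 0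

lemma evec_norm {m : ℕ} (j : Fin m) : ∑ x, ‖evec j x‖ ^ 2 = 1 := by
  have : ∀ x : Fin m, ‖evec j x‖ ^ 2 = if x = j then 1 else 0 := by
    intro x; by_cases h : x = j <;> simp [evec, h]
  simp only [this, Finset.sum_ite_eq', Finset.mem_univ, if_true]

def vec {m : ℕ} (j k : Fin m) (t : Fin 3) : Fin m → ℂ :=
  if j = k then evec j
  else fun x => ((if x = j then 1 else 0) + (if x = k then 1 else 0) * ω ^ (t : ℕ))
      * ((Real.sqrt 2)⁻¹ : ℝ)

lemma vec_norm {m : ℕ} (j k : Fin m) (t : Fin 3) : ∑ x, ‖vec j k t x‖ ^ 2 = 1 := by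
  by_cases h : j = k
  · subst h; rw [vec, if_pos rfl]; exact evec_norm j
  · rw [vec, if_neg h]
    have hs : ∀ x : Fin m, x ∉ ({j, k} : Finset (Fin m)) →
        ‖((if x = j then (1:ℂ) else 0) + (if x = k then (1:ℂ) else 0) * ω ^ (t : ℕ))
          * ((Real.sqrt 2)⁻¹ : ℝ)‖ ^ 2 = 0 := by
      intro x hx
      simp only [Finset.mem_insert, Finset.mem_singleton, not_or] at hx
      simp [hx.1, hx.2]
    rw [← Finset.sum_subset (Finset.subset_univ ({j, k} : Finset (Fin m)))
      (fun x _ hx => hs x hx)]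
    rw [Finset.sum_pair h]
    have h2 : ‖(((Real.sqrt 2)⁻¹ : ℝ) : ℂ)‖ ^ 2 = 1/2 := by
      rw [Complex.norm_real, Real.norm_eq_abs, abs_of_nonneg (by positivity),
        ← Real.sqrt_inv]
      rw [Real.sq_sqrt] <;> norm_num
    have hko : ‖(ω ^ (t:ℕ) : ℂ)‖ ^2 = 1 := by rw [norm_omega_pow]; norm_num
    simp only [eq_self_iff_true, if_true, if_neg h, if_neg (Ne.symm h),
      zero_mul, one_mul, add_zero, zero_add, norm_mul]
    rw [mul_pow, hko, one_mul, h2]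
    norm_num

lemma key_id (A B C D : ℂ) :
    (A + B) * (C + D) + ω * (A + B * ω) * (C + D * ω ^ 2)
      + ω ^ 2 * (A + B * ω ^ 2) * (C + D * ω ^ 4) = 3 * (A * D) := by
  linear_combination (A*C + B*C + B*D) * omega_sum
    + (A*D*(ω^3 + 2) + B*C*ω + B*D*(ω + ω^5 + ω^2)) * omega_cube

def coeff {m : ℕ} (M : Matrix (Fin m) (Fin m) ℂ) (j k : Fin m) (t : Fin 3) : ℂ :=
  if j = k then (if t = 0 then M j j else 0) else (2/3) * ω ^ (t : ℕ) * M j k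

lemma star_vec {m : ℕ} (j k : Fin m) (t : Fin 3) (y : Fin m) (h : ¬ j = k) :
    star (vec j k t y) = ((if y = j then 1 else 0)
      + (if y = k then 1 else 0) * (ω ^ 2) ^ (t : ℕ)) * ((Real.sqrt 2)⁻¹ : ℝ) := by
  rw [vec, if_neg h]
  simp only [star_mul', star_add, star_pow, omega_star, apply_ite (star : ℂ → ℂ),
    star_one, star_zero, Complex.star_def, Complex.conj_ofReal]

lemma tsum3 {m : ℕ} (M : Matrix (Fin m) (Fin m) ℂ) (x y j k : Fin m) :
    ∑ t : Fin 3, coeff M j k t * (vec j k t x * star (vec j k t y))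
      = if x = j ∧ y = k then M j k else 0 := by
  by_cases h : j = k
  · subst h
    simp only [coeff, if_pos rfl, vec, if_pos rfl]
    rw [Fin.sum_univ_three]
    by_cases hx : x = j <;> by_cases hy : y = j <;>
      simp [evec, hx, hy]
  · have hRHS : (if x = j ∧ y = k then M j k else 0)
        = M j k * ((if x = j then (1:ℂ) else 0) * (if y = k then (1:ℂ) else 0)) := by
      by_cases hx : x = j <;> by_cases hy : y = k <;> simp [hx, hy]
    have hr : (((Real.sqrt 2)⁻¹ : ℝ) : ℂ) * (((Real.sqrt 2)⁻¹ : ℝ) : ℂ) = 2⁻¹ := by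
      rw [← Complex.ofReal_mul, ← mul_inv, Real.mul_self_sqrt (by norm_num)]
      norm_num
    have key := key_id (if x = j then (1:ℂ) else 0) (if x = k then (1:ℂ) else 0)
      (if y = j then (1:ℂ) else 0) (if y = k then (1:ℂ) else 0)
    have hv : ∀ t : Fin 3, vec j k t x = ((if x = j then 1 else 0)
        + (if x = k then 1 else 0) * ω ^ (t : ℕ)) * ((Real.sqrt 2)⁻¹ : ℝ) := by
      intro t; rw [vec, if_neg h]
    simp only [coeff, if_neg h, star_vec j k _ _ h, hv]
    rw [Fin.sum_univ_three, hRHS]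
    simp only [Fin.val_zero, Fin.val_one, Fin.val_two, pow_zero, pow_one, mul_one]
    linear_combination ((2/3 : ℂ) * M j k * ((((Real.sqrt 2)⁻¹ : ℝ) : ℂ)
        * (((Real.sqrt 2)⁻¹ : ℝ) : ℂ))) * key
      + ((2 : ℂ) * M j k * ((if x = j then (1:ℂ) else 0)
        * (if y = k then (1:ℂ) else 0))) * hr


abbrev Idx (m : ℕ) := Fin m × Fin m × Fin 3

def vecI {m : ℕ} (i : Idx m) : Fin m → ℂ := vec i.1 i.2.1 i.2.2

lemma vecI_norm {m : ℕ} (i : Idx m) : ∑ x, ‖vecI i x‖ ^ 2 = 1 := vec_norm _ _ _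

lemma span_single {m : ℕ} (M : Matrix (Fin m) (Fin m) ℂ) :
    ∃ c : Idx m → ℂ,
      ∀ x y, M x y = ∑ i : Idx m, c i * (vecI i x * star (vecI i y)) := by
  refine ⟨fun i => coeff M i.1 i.2.1 i.2.2, fun x y => ?_⟩
  rw [Fintype.sum_prod_type]
  have h1 : ∀ j : Fin m, (∑ p : Fin m × Fin 3,
      coeff M j p.1 p.2 * (vecI (j, p) x * star (vecI (j, p) y)))
        = if x = j then M j y else 0 := by
    intro j
    rw [Fintype.sum_prod_type]
    have h2 : ∀ k : Fin m, (∑ t : Fin 3,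
        coeff M j k t * (vecI (j, k, t) x * star (vecI (j, k, t) y)))
          = if x = j ∧ y = k then M j k else 0 := fun k => tsum3 M x y j k
    rw [Finset.sum_congr rfl (fun k _ => h2 k)]
    by_cases hx : x = j
    · simp [hx, Finset.sum_ite_eq]
    · simp [hx]
  rw [Finset.sum_congr rfl (fun j _ => h1 j)]
  simp [Finset.sum_ite_eq]

lemma span_bi {m : ℕ} (σ : Matrix (Fin m × Fin m) (Fin m × Fin m) ℂ) :
    ∃ c : Idx m × Idx m → ℂ,
      σ = ∑ i : Idx m × Idx m, c i • prodState (vecI i.1) (vecI i.2) := by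
  choose γ hγ using fun M : Matrix (Fin m) (Fin m) ℂ => span_single M
  set A : Idx m → Matrix (Fin m) (Fin m) ℂ := fun i =>
    Matrix.of fun x2 y2 => γ (Matrix.of fun x1 y1 => σ (x1, x2) (y1, y2)) i with hA
  refine ⟨fun p => γ (A p.1) p.2, ?_⟩
  ext ⟨x1, x2⟩ ⟨y1, y2⟩
  have e1 := hγ (Matrix.of fun x1 y1 => σ (x1, x2) (y1, y2)) x1 y1
  simp only [Matrix.of_apply] at e1
  have e2 : ∀ i : Idx m, A i x2 y2 = ∑ i' : Idx m,
      γ (A i) i' * (vecI i' x2 * star (vecI i' y2)) := fun i => hγ (A i) x2 y2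
  calc σ (x1, x2) (y1, y2)
      = ∑ i : Idx m, A i x2 y2 * (vecI i x1 * star (vecI i y1)) := by
        rw [e1]
        exact Finset.sum_congr rfl fun i _ => by simp [hA]
    _ = ∑ i : Idx m, ∑ i' : Idx m, γ (A i) i' *
          ((vecI i x1 * star (vecI i y1)) * (vecI i' x2 * star (vecI i' y2))) := by
        refine Finset.sum_congr rfl fun i _ => ?_
        rw [e2 i, Finset.sum_mul]
        exact Finset.sum_congr rfl fun i' _ => by ring
    _ = (∑ p : Idx m × Idx m, γ (A p.1) p.2 • prodState (vecI p.1) (vecI p.2))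
          (x1, x2) (y1, y2) := by
        simp only [Matrix.sum_apply, Matrix.smul_apply, smul_eq_mul, prodState,
          Fintype.sum_prod_type]

lemma prodState_conjTranspose {α β : Type*} [Fintype α] [Fintype β]
    (a : α → ℂ) (b : β → ℂ) : (prodState a b)ᴴ = prodState a b := by
  ext x y
  simp only [Matrix.conjTranspose_apply, prodState, star_mul', star_star]
  ring

lemma prodState_trace {α β : Type*} [Fintype α] [Fintype β] [DecidableEq α] [DecidableEq β]
    (a : α → ℂ) (b : β → ℂ) (ha : ∑ x, ‖a x‖ ^ 2 = 1) (hb : ∑ x, ‖b x‖ ^ 2 = 1) :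
    (prodState a b).trace = 1 := by
  have key : ∀ (z : ℂ), z * star z = ((‖z‖ ^ 2 : ℝ) : ℂ) := by
    intro z
    rw [Complex.star_def, Complex.mul_conj, Complex.normSq_eq_norm_sq]
  simp only [Matrix.trace, Matrix.diag, prodState]
  rw [Fintype.sum_prod_type]
  have : ∀ x1 : α, ∑ x2 : β, (a x1 * star (a x1)) * (b x2 * star (b x2))
      = (a x1 * star (a x1)) * ∑ x2 : β, (b x2 * star (b x2)) := fun x1 =>
    (Finset.mul_sum _ _ _).symm
  rw [Finset.sum_congr rfl fun x1 _ => this x1, ← Finset.sum_mul]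
  have hsa : ∑ x, a x * star (a x) = 1 := by
    rw [Finset.sum_congr rfl fun x _ => key (a x)]
    rw [← Complex.ofReal_sum, ha, Complex.ofReal_one]
  have hsb : ∑ x, b x * star (b x) = 1 := by
    rw [Finset.sum_congr rfl fun x _ => key (b x)]
    rw [← Complex.ofReal_sum, hb, Complex.ofReal_one]
  rw [hsa, hsb, one_mul]

lemma density_decomp {m : ℕ} (σ : Matrix (Fin m × Fin m) (Fin m × Fin m) ℂ)
    (hσ : IsDensity σ) :
    ∃ (k : ℕ) (r : Fin k → ℝ) (a b : Fin k → Fin m → ℂ),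
      (∀ i, ∑ x, ‖a i x‖ ^ 2 = 1) ∧ (∀ i, ∑ x, ‖b i x‖ ^ 2 = 1) ∧
      (∑ i, r i = 1) ∧ σ = ∑ i, ((r i : ℝ) : ℂ) • prodState (a i) (b i) := by
  obtain ⟨c, hc⟩ := span_bi σ
  have hH : σ.IsHermitian := hσ.1.1
  have herm : σ = ∑ i : Idx m × Idx m,
      (((c i).re : ℝ) : ℂ) • prodState (vecI i.1) (vecI i.2) := by
    have h2 : σᴴ = ∑ i : Idx m × Idx m,
        (star (c i)) • prodState (vecI i.1) (vecI i.2) := by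
      conv_lhs => rw [hc]
      rw [Matrix.conjTranspose_sum]
      exact Finset.sum_congr rfl fun i _ => by
        rw [Matrix.conjTranspose_smul, prodState_conjTranspose]
    have hs : σ = (2⁻¹ : ℂ) • (σ + σᴴ) := by
      rw [hH.eq, ← two_smul ℂ σ, smul_smul]
      norm_num
    rw [hs]
    conv_lhs => rw [h2, hc]
    rw [← Finset.sum_add_distrib, Finset.smul_sum]
    refine Finset.sum_congr rfl fun i _ => ?_
    rw [← add_smul, smul_smul]
    congr 1
    rw [Complex.star_def, Complex.add_conj]
    push_cast
    ring
  have htr : ∑ i : Idx m × Idx m, (c i).re = 1 := by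
    have ht : σ.trace = ((∑ i : Idx m × Idx m, (c i).re : ℝ) : ℂ) := by
      conv_lhs => rw [herm]
      rw [Matrix.trace_sum, Complex.ofReal_sum]
      refine Finset.sum_congr rfl fun i _ => ?_
      rw [Matrix.trace_smul, prodState_trace _ _ (vecI_norm _) (vecI_norm _),
        smul_eq_mul, mul_one]
    rw [hσ.2] at ht
    exact_mod_cast ht.symm
  set n := Fintype.card (Idx m × Idx m)
  set e : Fin n ≃ Idx m × Idx m := (Fintype.equivFin (Idx m × Idx m)).symm with he
  refine ⟨n, fun i => (c (e i)).re, fun i => vecI (e i).1, fun i => vecI (e i).2,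
    fun i => vecI_norm _, fun i => vecI_norm _, ?_, ?_⟩
  · rw [Equiv.sum_comp e (fun j => (c j).re)]
    exact htr
  · rw [herm]
    exact (Equiv.sum_comp e (fun j =>
      (((c j).re : ℝ) : ℂ) • prodState (vecI j.1) (vecI j.2))).symm

lemma max_split (r : ℝ) : max r 0 = r + max (-r) 0 := by
  rcases le_total r 0 with h | h
  · rw [max_eq_right h, max_eq_left (by linarith : (0:ℝ) ≤ -r)]; ring
  · rw [max_eq_left h, max_eq_right (by linarith : -r ≤ (0:ℝ))]; ring

lemma robust_nonempty {m : ℕ} (hm : 0 < m) (σ : Matrix (Fin m × Fin m) (Fin m × Fin m) ℂ)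
    (hσ : IsDensity σ) :
    { s : ℝ | 0 ≤ s ∧ ∃ π : Matrix (Fin m × Fin m) (Fin m × Fin m) ℂ, SepState π ∧
      SepState ((((1 + s)⁻¹ : ℝ) : ℂ) • σ + (((s / (1 + s)) : ℝ) : ℂ) • π) }.Nonempty := by
  obtain ⟨k, r, a, b, hna, hnb, hr1, hdec⟩ := density_decomp σ hσ
  set N : ℝ := ∑ i, max (-(r i)) 0 with hN
  have hN0 : 0 ≤ N := Finset.sum_nonneg fun i _ => le_max_right _ _
  have hN1 : (0:ℝ) < N + 1 := by linarith
  have hN2 : (0:ℝ) < N + 2 := by linarith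
  set e0 : Fin m → ℂ := evec ⟨0, hm⟩ with he0
  set a' : Fin (k+1) → Fin m → ℂ := Fin.snoc a e0 with ha'
  set b' : Fin (k+1) → Fin m → ℂ := Fin.snoc b e0 with hb'
  set q : Fin (k+1) → ℝ := Fin.snoc (fun i => max (-(r i)) 0 / (N+1)) (1/(N+1)) with hq
  set p : Fin (k+1) → ℝ := Fin.snoc (fun i => max (r i) 0 / (N+2)) (1/(N+2)) with hp
  set π : Matrix (Fin m × Fin m) (Fin m × Fin m) ℂ :=
    ∑ i : Fin (k+1), ((q i : ℝ) : ℂ) • prodState (a' i) (b' i) with hπ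
  have hnorma : ∀ i : Fin (k+1), ∑ x, ‖a' i x‖ ^ 2 = 1 := by
    intro i
    refine Fin.lastCases ?_ ?_ i
    · rw [ha']; simp only [Fin.snoc_last]; exact evec_norm _
    · intro j; rw [ha']; simp only [Fin.snoc_castSucc]; exact hna j
  have hnormb : ∀ i : Fin (k+1), ∑ x, ‖b' i x‖ ^ 2 = 1 := by
    intro i
    refine Fin.lastCases ?_ ?_ i
    · rw [hb']; simp only [Fin.snoc_last]; exact evec_norm _
    · intro j; rw [hb']; simp only [Fin.snoc_castSucc]; exact hnb j
  refine ⟨N + 1, le_of_lt hN1, π, ?_, ?_⟩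
  · refine ⟨k+1, q, a', b', ?_, ?_, hnorma, hnormb, rfl⟩
    · intro i
      refine Fin.lastCases ?_ ?_ i
      · rw [hq]; simp only [Fin.snoc_last]; positivity
      · intro j; rw [hq]; simp only [Fin.snoc_castSucc]
        exact div_nonneg (le_max_right _ _) hN1.le
    · rw [Fin.sum_univ_castSucc, hq]
      simp only [Fin.snoc_castSucc, Fin.snoc_last]
      rw [← Finset.sum_div, ← hN]
      field_simp
  · have hco : ∀ i : Fin k, (1 + (N+1))⁻¹ * r i
        + ((N+1) / (1 + (N+1))) * (max (-(r i)) 0 / (N+1)) = max (r i) 0 / (N+2) := by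
      intro i
      rw [max_split (r i)]
      have h2 : (1 : ℝ) + (N+1) = N + 2 := by ring
      rw [h2]
      field_simp
    have hclast : ((N+1) / (1 + (N+1))) * (1/(N+1)) = 1/(N+2) := by
      have h2 : (1 : ℝ) + (N+1) = N + 2 := by ring
      rw [h2]; field_simp
    have key : ((((1 + (N+1))⁻¹ : ℝ)) : ℂ) • σ
        + ((((N+1) / (1 + (N+1)) : ℝ)) : ℂ) • π
        = ∑ i : Fin (k+1), ((p i : ℝ) : ℂ) • prodState (a' i) (b' i) := by
      rw [hdec, hπ]
      rw [Finset.smul_sum, Finset.smul_sum]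
      rw [Fin.sum_univ_castSucc, Fin.sum_univ_castSucc (n := k)]
      simp only [ha', hb', hq, hp, Fin.snoc_castSucc, Fin.snoc_last]
      rw [← add_assoc, ← Finset.sum_add_distrib]
      congr 1
      · refine Finset.sum_congr rfl fun i _ => ?_
        rw [smul_smul, smul_smul, ← add_smul]
        congr 1
        push_cast
        have h := congrArg Complex.ofReal (hco i)
        push_cast at h
        exact h
      · rw [smul_smul]
        congr 1
        exact_mod_cast congrArg Complex.ofReal hclast
    refine ⟨k+1, p, a', b', ?_, ?_, hnorma, hnormb, key⟩
    · intro i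
      refine Fin.lastCases ?_ ?_ i
      · rw [hp]; simp only [Fin.snoc_last]; positivity
      · intro j; rw [hp]; simp only [Fin.snoc_castSucc]
        exact div_nonneg (le_max_right _ _) hN2.le
    · rw [Fin.sum_univ_castSucc, hp]
      simp only [Fin.snoc_castSucc, Fin.snoc_last]
      rw [← Finset.sum_div]
      have : ∑ i : Fin k, max (r i) 0 = 1 + N := by
        rw [Finset.sum_congr rfl fun i _ => max_split (r i), Finset.sum_add_distrib,
          hr1, ← hN]
      rw [this]
      field_simp
      ring

end WLB

/-- Every normalized entanglement witness lower bounds the robustness of entanglement. -/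
theorem witness_lower_bound {m : ℕ} (σ W : Matrix (Fin m × Fin m) (Fin m × Fin m) ℂ) (hσ : IsDensity σ)
    (hW : W.IsHermitian)
    (hup : ∀ π : Matrix (Fin m × Fin m) (Fin m × Fin m) ℂ, SepState π → (W * π).trace.re ≤ 1)
    (hlo : ∀ π : Matrix (Fin m × Fin m) (Fin m × Fin m) ℂ, SepState π → 0 ≤ (W * π).trace.re) :
    -(W * σ).trace.re ≤ robustness σ := by
  rcases Nat.eq_zero_or_pos m with hm | hm
  · exfalso
    subst hm
    have h0 : σ.trace = 0 := by
      simp [Matrix.trace]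
    rw [hσ.2] at h0
    exact absurd h0 one_ne_zero
  · rw [robustness]
    refine le_csInf (WLB.robust_nonempty hm σ hσ) ?_
    rintro s ⟨hs0, π, hπ, hmix⟩
    have h1 := hlo _ hmix
    have h2 := hup _ hπ
    have h3 := hlo _ hπ
    have hs1 : (0:ℝ) < 1 + s := by linarith
    have htr : (W * ((((1 + s)⁻¹ : ℝ) : ℂ) • σ + (((s / (1 + s)) : ℝ) : ℂ) • π)).trace.re
        = (1+s)⁻¹ * (W*σ).trace.re + (s/(1+s)) * (W*π).trace.re := by
      rw [Matrix.mul_add, Matrix.mul_smul, Matrix.mul_smul, Matrix.trace_add,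
        Matrix.trace_smul, Matrix.trace_smul, smul_eq_mul, smul_eq_mul]
      rw [Complex.add_re, Complex.re_ofReal_mul, Complex.re_ofReal_mul]
    rw [htr] at h1
    have hexp : (1+s) * ((1+s)⁻¹ * (W*σ).trace.re + (s/(1+s)) * (W*π).trace.re)
        = (W*σ).trace.re + s * (W*π).trace.re := by
      field_simp
    have h4 : 0 ≤ (W*σ).trace.re + s * (W*π).trace.re := by
      rw [← hexp]
      exact mul_nonneg hs1.le h1
    nlinarith [mul_le_mul_of_nonneg_left h2 hs0]

end
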